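/- arXiv:2409.16276 — 4 statements merged into one kernel-verified Lean document; each statement's English description precedes it below -/
import Mathlib

section
/- The function g(t) = -log(η·(1/(2ν₁))e^{-t/ν₁} + (1-η)·(1/(2ν₀))e^{-t/ν₀}) is concave on [0,∞). -/
open Real

private lemma holder2 {a b p q r s : ℝ} (ha : 0 ≤ a) (hb : 0 ≤ b) (hab : a + b = 1)
    (hp : 0 < p) (hq : 0 < q) (hr : 0 < r) (hs : 0 < s) :
    p ^ a * q ^ b + r ^ a * s ^ b ≤ (p + r) ^ a * (q + s) ^ b := by
  have hP : 0 < p + r := by linarith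
  have hQ : 0 < q + s := by linarith
  have h1 : p ^ a * q ^ b = (p + r) ^ a * (q + s) ^ b * ((p / (p + r)) ^ a * (q / (q + s)) ^ b) := by
    rw [Real.div_rpow hp.le hP.le, Real.div_rpow hq.le hQ.le]
    field_simp
  have h2 : r ^ a * s ^ b = (p + r) ^ a * (q + s) ^ b * ((r / (p + r)) ^ a * (s / (q + s)) ^ b) := by
    rw [Real.div_rpow hr.le hP.le, Real.div_rpow hs.le hQ.le]
    field_simp
  have g1 := Real.geom_mean_le_arith_mean2_weighted ha hb (div_pos hp hP).le (div_pos hq hQ).le hab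
  have g2 := Real.geom_mean_le_arith_mean2_weighted ha hb (div_pos hr hP).le (div_pos hs hQ).le hab
  have key : (p / (p + r)) ^ a * (q / (q + s)) ^ b + (r / (p + r)) ^ a * (s / (q + s)) ^ b ≤ 1 := by
    have : a * (p / (p + r)) + b * (q / (q + s)) + (a * (r / (p + r)) + b * (s / (q + s))) = 1 := by
      field_simp
      linear_combination (p * q + p * s + q * r + s * r) * hab
    linarith
  have hPQ : 0 ≤ (p + r) ^ a * (q + s) ^ b :=
    mul_nonneg (Real.rpow_nonneg hP.le a) (Real.rpow_nonneg hQ.le b)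
  calc p ^ a * q ^ b + r ^ a * s ^ b
      = (p + r) ^ a * (q + s) ^ b *
        ((p / (p + r)) ^ a * (q / (q + s)) ^ b + (r / (p + r)) ^ a * (s / (q + s)) ^ b) := by
        rw [h1, h2]; ring
    _ ≤ (p + r) ^ a * (q + s) ^ b * 1 := by
        exact mul_le_mul_of_nonneg_left key hPQ
    _ = (p + r) ^ a * (q + s) ^ b := mul_one _

theorem spike_slab_penalty_concave (ν₀ ν₁ η : ℝ)
    (hν₀ : 0 < ν₀) (hν₁ : 0 < ν₁) (hη₀ : 0 < η) (hη₁ : η < 1) :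
    ConcaveOn ℝ (Set.Ici (0 : ℝ))
      (fun t : ℝ => -Real.log
        (η * (1 / (2 * ν₁)) * Real.exp (-t / ν₁)
          + (1 - η) * (1 / (2 * ν₀)) * Real.exp (-t / ν₀))) := by
  set c1 : ℝ := η * (1 / (2 * ν₁)) with hc1def
  set c2 : ℝ := (1 - η) * (1 / (2 * ν₀)) with hc2def
  have hc1 : 0 < c1 := by positivity
  have hc2 : 0 < c2 := by
    have : 0 < 1 - η := by linarith
    positivity
  set F : ℝ → ℝ := fun t => c1 * Real.exp (-t / ν₁) + c2 * Real.exp (-t / ν₀) with hF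
  have hFpos : ∀ t : ℝ, 0 < F t := fun t => by positivity
  have hconv : ConvexOn ℝ (Set.Ici (0 : ℝ)) (fun t => Real.log (F t)) := by
    refine ⟨convex_Ici 0, fun x _ y _ a b ha hb hab => ?_⟩
    simp only [smul_eq_mul]
    have expand : ∀ ν : ℝ, 0 < ν → Real.exp (-(a * x + b * y) / ν)
        = Real.exp (-x / ν) ^ a * Real.exp (-y / ν) ^ b := by
      intro ν hν
      rw [← Real.exp_mul, ← Real.exp_mul, ← Real.exp_add]
      congr 1
      field_simp
      ring
    have hc1split : c1 = c1 ^ a * c1 ^ b := by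
      rw [← Real.rpow_add hc1, hab, Real.rpow_one]
    have hc2split : c2 = c2 ^ a * c2 ^ b := by
      rw [← Real.rpow_add hc2, hab, Real.rpow_one]
    have hFexp : F (a * x + b * y)
        = (c1 * Real.exp (-x / ν₁)) ^ a * (c1 * Real.exp (-y / ν₁)) ^ b
          + (c2 * Real.exp (-x / ν₀)) ^ a * (c2 * Real.exp (-y / ν₀)) ^ b := by
      rw [Real.mul_rpow hc1.le (Real.exp_pos _).le, Real.mul_rpow hc1.le (Real.exp_pos _).le,
        Real.mul_rpow hc2.le (Real.exp_pos _).le, Real.mul_rpow hc2.le (Real.exp_pos _).le]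
      simp only [hF]
      rw [expand ν₁ hν₁, expand ν₀ hν₀]
      nth_rewrite 1 [hc1split]
      nth_rewrite 1 [hc2split]
      ring
    have hle : F (a * x + b * y) ≤ (F x) ^ a * (F y) ^ b := by
      rw [hFexp]
      exact holder2 ha hb hab (by positivity) (by positivity) (by positivity) (by positivity)
    calc Real.log (F (a * x + b * y)) ≤ Real.log ((F x) ^ a * (F y) ^ b) :=
          Real.log_le_log (hFpos _) hle
      _ = a * Real.log (F x) + b * Real.log (F y) := by
          rw [Real.log_mul (by positivity) (by positivity), Real.log_rpow (hFpos _),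
            Real.log_rpow (hFpos _)]
  exact hconv.neg
end

section
/- Let f: ℝ^d → ℝ be differentiable, and suppose for parameter Δ with Φ = Φ⁰ + Δ we have the strong convexity lower bound f(Φ⁰+Δ) - f(Φ⁰) ≥ ⟨∇f(Φ⁰), Δ⟩ + β‖Δ‖² with β > 0, and the gradient bound ‖∇f(Φ⁰)‖_∞ ≤ γ. If additionally 0 ≥ f(Φ⁰+Δ) - f(Φ⁰) + (1/ν₁)‖Δ_{S^c}‖₁ - (1/ν₀)‖Δ_S‖₁ for an index set S, and 1/ν₁ ≥ 2γ, then β‖Δ‖² ≤ (γ + 1/ν₀)‖Δ_S‖₁, and consequently ‖Δ‖ ≤ (γ + 1/ν₀)√|S| / β. -/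
open Finset

theorem strong_convexity_error_bound (d : ℕ) (f : (Fin d → ℝ) → ℝ)
    (Φ Δ g : Fin d → ℝ) (S : Finset (Fin d)) (β γ ν₀ ν₁ : ℝ)
    (hβ : 0 < β) (hγ : 0 ≤ γ) (hν₀ : 0 < ν₀) (hν₁ : 0 < ν₁)
    (hdiff : Differentiable ℝ f)
    (hgrad : ∀ v : Fin d → ℝ, fderiv ℝ f Φ v = ∑ i, g i * v i)
    (hsc : f (Φ + Δ) - f Φ ≥ (∑ i, g i * Δ i) + β * ∑ i, (Δ i) ^ 2)
    (hsup : ∀ i, |g i| ≤ γ)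
    (hpen : 0 ≥ f (Φ + Δ) - f Φ
        + (1 / ν₁) * ∑ i ∈ Sᶜ, |Δ i| - (1 / ν₀) * ∑ i ∈ S, |Δ i|)
    (hν : 1 / ν₁ ≥ 2 * γ) :
    β * ∑ i, (Δ i) ^ 2 ≤ (γ + 1 / ν₀) * ∑ i ∈ S, |Δ i| ∧
    Real.sqrt (∑ i, (Δ i) ^ 2) ≤ (γ + 1 / ν₀) * Real.sqrt S.card / β := by
  set T := ∑ i, (Δ i) ^ 2 with hT
  set A := ∑ i ∈ S, |Δ i| with hA
  set B := ∑ i ∈ Sᶜ, |Δ i| with hB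
  have hA0 : 0 ≤ A := Finset.sum_nonneg fun i _ => abs_nonneg _
  have hB0 : 0 ≤ B := Finset.sum_nonneg fun i _ => abs_nonneg _
  have hT0 : 0 ≤ T := Finset.sum_nonneg fun i _ => sq_nonneg _
  -- bound the inner product
  have hip : |∑ i, g i * Δ i| ≤ γ * (A + B) := by
    calc |∑ i, g i * Δ i| ≤ ∑ i, |g i * Δ i| := Finset.abs_sum_le_sum_abs _ _
      _ ≤ ∑ i, γ * |Δ i| := by
          refine Finset.sum_le_sum fun i _ => ?_
          rw [abs_mul]
          exact mul_le_mul_of_nonneg_right (hsup i) (abs_nonneg _)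
      _ = γ * ∑ i, |Δ i| := by rw [Finset.mul_sum]
      _ = γ * (A + B) := by
          rw [hA, hB, Finset.sum_add_sum_compl]
  have hγν : γ ≤ 1 / ν₁ := by nlinarith
  have h1 : β * T ≤ (γ + 1 / ν₀) * A := by
    have := abs_le.mp hip
    nlinarith [this.1, this.2]
  refine ⟨h1, ?_⟩
  -- Cauchy–Schwarz: A ≤ √|S| * √T
  have hcs : A ^ 2 ≤ (S.card : ℝ) * T := by
    have := sq_sum_le_card_mul_sum_sq (s := S) (f := fun i => |Δ i|)
    calc A ^ 2 ≤ (S.card : ℝ) * ∑ i ∈ S, |Δ i| ^ 2 := this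
      _ ≤ (S.card : ℝ) * T := by
          apply mul_le_mul_of_nonneg_left _ (Nat.cast_nonneg _)
          rw [hT]
          refine Finset.sum_le_sum_of_subset_of_nonneg (Finset.subset_univ S)
            (fun i _ _ => sq_nonneg _) |>.trans_eq ?_
          exact Finset.sum_congr rfl fun i _ => by rw [sq_abs]
  have hAle : A ≤ Real.sqrt (S.card) * Real.sqrt T := by
    rw [← Real.sqrt_mul_self hA0, ← Real.sqrt_mul (Nat.cast_nonneg _)]
    exact Real.sqrt_le_sqrt (by nlinarith)
  have hsT : Real.sqrt T * Real.sqrt T = T := Real.mul_self_sqrt hT0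
  have hC0 : 0 ≤ γ + 1 / ν₀ := by positivity
  rcases eq_or_lt_of_le (Real.sqrt_nonneg T) with h0 | h0
  · rw [← h0]
    positivity
  · rw [le_div_iff₀ hβ]
    nlinarith [Real.sqrt_nonneg (S.card : ℝ)]
end

section
/- Under the penalty comparison inequality 0 ≥ ⟨∇f(Φ⁰), Δ⟩ + β‖Δ‖² + (1/ν₁)‖Δ_{S^c}‖₁ - (1/ν₀)‖Δ_S‖₁ with ‖∇f(Φ⁰)‖_∞ ≤ γ and 1/ν₁ > 2γ, the error Δ lies in the cone ‖Δ_{S^c}‖₁ ≤ α‖Δ_S‖₁ with α = (1/ν₀ + γ)/(1/ν₁ - γ) ≤ 1 + 2ν₁/ν₀. -/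
open Finset

theorem cone_condition_of_penalty_ineq (d : ℕ) (f : (Fin d → ℝ) → ℝ)
    (Φ Δ g : Fin d → ℝ) (S : Finset (Fin d)) (β γ ν₀ ν₁ : ℝ)
    (hβ : 0 ≤ β) (hγ : 0 ≤ γ) (hν₀ : 0 < ν₀) (hν₁ : 0 < ν₁)
    (hgrad : ∀ v : Fin d → ℝ, fderiv ℝ f Φ v = ∑ i, g i * v i)
    (hsup : ∀ i, |g i| ≤ γ)
    (hpen : 0 ≥ (∑ i, g i * Δ i) + β * ∑ i, (Δ i) ^ 2
        + (1 / ν₁) * ∑ i ∈ Sᶜ, |Δ i| - (1 / ν₀) * ∑ i ∈ S, |Δ i|)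
    (hν : 1 / ν₁ > 2 * γ) :
    (∑ i ∈ Sᶜ, |Δ i|) ≤ ((1 / ν₀ + γ) / (1 / ν₁ - γ)) * ∑ i ∈ S, |Δ i| ∧
    (1 / ν₀ + γ) / (1 / ν₁ - γ) ≤ 1 + 2 * ν₁ / ν₀ := by
  set A := ∑ i ∈ S, |Δ i| with hAdef
  set B := ∑ i ∈ Sᶜ, |Δ i| with hBdef
  have hA : 0 ≤ A := Finset.sum_nonneg fun i _ => abs_nonneg _
  have hB : 0 ≤ B := Finset.sum_nonneg fun i _ => abs_nonneg _
  have hsplit : A + B = ∑ i, |Δ i| := Finset.sum_add_sum_compl S _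
  have habs : |∑ i, g i * Δ i| ≤ γ * (A + B) := by
    calc |∑ i, g i * Δ i| ≤ ∑ i, |g i * Δ i| := Finset.abs_sum_le_sum_abs _ _
      _ ≤ ∑ i, γ * |Δ i| := by
          refine Finset.sum_le_sum fun i _ => ?_
          rw [abs_mul]
          exact mul_le_mul_of_nonneg_right (hsup i) (abs_nonneg _)
      _ = γ * (A + B) := by rw [← Finset.mul_sum, hsplit]
  have hlow : -(γ * (A + B)) ≤ ∑ i, g i * Δ i := neg_le_of_abs_le habs
  have hsq : 0 ≤ β * ∑ i, (Δ i) ^ 2 :=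
    mul_nonneg hβ (Finset.sum_nonneg fun i _ => sq_nonneg _)
  have hkey : (1 / ν₁ - γ) * B ≤ (1 / ν₀ + γ) * A := by nlinarith
  have hpos : 0 < 1 / ν₁ - γ := by linarith
  constructor
  · rw [div_mul_eq_mul_div, le_div_iff₀ hpos]
    nlinarith
  · rw [div_le_iff₀ hpos]
    have h1 : 0 < ν₀ * ν₁ := mul_pos hν₀ hν₁
    have h2 : 2 * γ * ν₁ < 1 := (lt_div_iff₀ hν₁).mp hν
    field_simp
    nlinarith [mul_nonneg hν₀.le (sub_nonneg.mpr h2.le),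
      mul_nonneg hν₁.le (sub_nonneg.mpr h2.le)]
end

section
/- Let B = -Λ⁻¹Θᵀ and B⁰ = -(Λ⁰)⁻¹(Θ⁰)ᵀ with Λ, Λ⁰ invertible. If ‖Θ - Θ⁰‖_F ≤ ε, ‖Λ - Λ⁰‖_F ≤ ε, F_Λ := ‖(Λ⁰)⁻¹‖_F, F_Θ := ‖Θ⁰‖_F, and F_Λ·ε < 1, then ‖B - B⁰‖_F ≤ (F_Λ ε/(1 - F_Λ ε))(1 + F_Λ F_Θ). -/
open Matrix

noncomputable def frob {m n : ℕ} (A : Matrix (Fin m) (Fin n) ℝ) : ℝ :=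
  Real.sqrt (∑ i, ∑ j, (A i j) ^ 2)

attribute [local instance] Matrix.frobeniusSeminormedAddCommGroup

lemma frob_eq {m n : ℕ} (A : Matrix (Fin m) (Fin n) ℝ) : frob A = ‖A‖ := by
  rw [frob, Matrix.frobenius_norm_def, ← Real.sqrt_eq_rpow]
  congr 1
  refine Finset.sum_congr rfl fun i _ => Finset.sum_congr rfl fun j _ => ?_
  rw [Real.norm_eq_abs, Real.rpow_two, sq_abs]

lemma aux_inv_bound (d FΛ ε : ℝ) (hd0 : 0 ≤ d) (hden : 0 < 1 - FΛ * ε)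
    (hdb : d ≤ (FΛ + d) * (ε * FΛ)) : d ≤ FΛ ^ 2 * ε / (1 - FΛ * ε) := by
  rw [le_div_iff₀ hden]
  nlinarith

lemma aux_final (FΛ FΘ ε : ℝ) (hFΛ0 : 0 ≤ FΛ) (hFΘ0 : 0 ≤ FΘ) (hε0 : 0 ≤ ε)
    (hden : 0 < 1 - FΛ * ε) :
    (FΛ ^ 2 * ε / (1 - FΛ * ε)) * (FΘ + ε) + FΛ * ε
      ≤ (FΛ * ε / (1 - FΛ * ε)) * (1 + FΛ * FΘ) := by
  rw [div_mul_eq_mul_div, div_mul_eq_mul_div, div_add' _ _ _ (ne_of_gt hden),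
    div_le_div_iff₀ hden hden]
  nlinarith

set_option maxHeartbeats 1000000 in
theorem plugin_B_error_bound (p q : ℕ)
    (Θ Θ₀ : Matrix (Fin q) (Fin p) ℝ) (Λ Λ₀ : Matrix (Fin p) (Fin p) ℝ)
    (ε : ℝ) (hΛ : IsUnit Λ.det) (hΛ₀ : IsUnit Λ₀.det)
    (hΘ : frob (Θ - Θ₀) ≤ ε) (hΛd : frob (Λ - Λ₀) ≤ ε)
    (hsmall : frob Λ₀⁻¹ * ε < 1) :
    frob (-(Λ⁻¹ * Θᵀ) - -(Λ₀⁻¹ * Θ₀ᵀ))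
      ≤ (frob Λ₀⁻¹ * ε / (1 - frob Λ₀⁻¹ * ε)) * (1 + frob Λ₀⁻¹ * frob Θ₀) := by
  simp only [frob_eq] at *
  set FΛ := ‖Λ₀⁻¹‖ with hFΛ
  set FΘ := ‖Θ₀‖ with hFΘ
  have hFΛ0 : 0 ≤ FΛ := norm_nonneg _
  have hFΘ0 : 0 ≤ FΘ := norm_nonneg _
  have hε0 : 0 ≤ ε := le_trans (norm_nonneg _) hΘ
  have hden : 0 < 1 - FΛ * ε := by linarith
  -- inverse perturbation identity
  have hid : Λ⁻¹ - Λ₀⁻¹ = Λ⁻¹ * (Λ₀ - Λ) * Λ₀⁻¹ := by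
    rw [Matrix.mul_sub, Matrix.sub_mul, Matrix.nonsing_inv_mul _ hΛ, Matrix.one_mul,
      Matrix.mul_assoc, Matrix.mul_nonsing_inv _ hΛ₀, Matrix.mul_one]
  have hΛd' : ‖Λ₀ - Λ‖ ≤ ε := by rwa [norm_sub_rev]
  set d := ‖Λ⁻¹ - Λ₀⁻¹‖ with hd
  have hd0 : 0 ≤ d := norm_nonneg _
  have hdb : d ≤ (FΛ + d) * (ε * FΛ) := by
    calc d = ‖Λ⁻¹ * (Λ₀ - Λ) * Λ₀⁻¹‖ := by rw [hd, hid]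
      _ ≤ ‖Λ⁻¹ * (Λ₀ - Λ)‖ * ‖Λ₀⁻¹‖ := Matrix.frobenius_norm_mul _ _
      _ ≤ ‖Λ⁻¹‖ * ‖Λ₀ - Λ‖ * ‖Λ₀⁻¹‖ := by
          gcongr; exact Matrix.frobenius_norm_mul _ _
      _ ≤ (FΛ + d) * ε * ‖Λ₀⁻¹‖ := by
          have h1 : ‖Λ⁻¹‖ ≤ FΛ + d := by
            have := norm_sub_norm_le (Λ⁻¹) (Λ₀⁻¹)
            rw [← hd] at this; linarith [this]
          gcongr
      _ = (FΛ + d) * (ε * FΛ) := by rw [← hFΛ]; ring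
  have hdbound : d ≤ FΛ ^ 2 * ε / (1 - FΛ * ε) := aux_inv_bound d FΛ ε hd0 hden hdb
  have hΘb : ‖Θ‖ ≤ FΘ + ε := by
    have := norm_sub_norm_le Θ Θ₀
    linarith
  -- decomposition
  have hdec : -(Λ⁻¹ * Θᵀ) - -(Λ₀⁻¹ * Θ₀ᵀ)
      = -((Λ⁻¹ - Λ₀⁻¹) * Θᵀ) - Λ₀⁻¹ * (Θ - Θ₀)ᵀ := by
    rw [Matrix.transpose_sub, Matrix.sub_mul, Matrix.mul_sub]
    abel
  have hmain : ‖-(Λ⁻¹ * Θᵀ) - -(Λ₀⁻¹ * Θ₀ᵀ)‖ ≤ d * (FΘ + ε) + FΛ * ε := by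
    rw [hdec]
    calc ‖-((Λ⁻¹ - Λ₀⁻¹) * Θᵀ) - Λ₀⁻¹ * (Θ - Θ₀)ᵀ‖
        ≤ ‖-((Λ⁻¹ - Λ₀⁻¹) * Θᵀ)‖ + ‖Λ₀⁻¹ * (Θ - Θ₀)ᵀ‖ := norm_sub_le _ _
      _ = ‖(Λ⁻¹ - Λ₀⁻¹) * Θᵀ‖ + ‖Λ₀⁻¹ * (Θ - Θ₀)ᵀ‖ := by rw [norm_neg]
      _ ≤ ‖Λ⁻¹ - Λ₀⁻¹‖ * ‖Θᵀ‖ + ‖Λ₀⁻¹‖ * ‖(Θ - Θ₀)ᵀ‖ := by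
          gcongr <;> exact Matrix.frobenius_norm_mul _ _
      _ = d * ‖Θ‖ + FΛ * ‖Θ - Θ₀‖ := by
          rw [Matrix.frobenius_norm_transpose, Matrix.frobenius_norm_transpose, ← hd, ← hFΛ]
      _ ≤ d * (FΘ + ε) + FΛ * ε := by gcongr
  refine hmain.trans ?_
  have key : d * (FΘ + ε) + FΛ * ε ≤
      (FΛ ^ 2 * ε / (1 - FΛ * ε)) * (FΘ + ε) + FΛ * ε := by
    have : 0 ≤ FΘ + ε := by linarith
    gcongr
  exact key.trans (aux_final FΛ FΘ ε hFΛ0 hFΘ0 hε0 hden)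
end
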